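/- The set {(n, 2^n) : n ≥ 0} ⊆ ℕ² is not semilinear, i.e., it is not a finite union of sets of the form {v₀ + c₁v₁ + … + c_rv_r : c_i ∈ ℕ} with v₀,…,v_r ∈ ℕ². -/

import Mathlib

/-- A subset of ℕ² is linear if it has the form
`{v₀ + c₁ • v₁ + … + c_r • v_r : cᵢ ∈ ℕ}`. -/
def IsLinearSetNat2 (S : Set (ℕ × ℕ)) : Prop :=
  ∃ (v₀ : ℕ × ℕ) (r : ℕ) (v : Fin r → ℕ × ℕ),
    S = {x | ∃ c : Fin r → ℕ, x = v₀ + ∑ i, c i • v i}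

/-- A subset of ℕ² is semilinear if it is a finite union of linear sets. -/
def IsSemilinearSetNat2 (S : Set (ℕ × ℕ)) : Prop :=
  ∃ (n : ℕ) (L : Fin n → Set (ℕ × ℕ)), (∀ i, IsLinearSetNat2 (L i)) ∧ S = ⋃ i, L i

theorem pow_not_semilinear :
    ¬ IsSemilinearSetNat2 {p : ℕ × ℕ | ∃ n : ℕ, p = (n, 2 ^ n)} := by
  rintro ⟨n, L, hlin, hS⟩
  have hfin : ∀ i, (L i).Finite := by
    intro i
    obtain ⟨v₀, r, v, hv⟩ := hlin i
    have hsub : L i ⊆ {p : ℕ × ℕ | ∃ n : ℕ, p = (n, 2 ^ n)} := by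
      rw [hS]; exact Set.subset_iUnion L i
    by_cases hz : ∀ j, v j = 0
    · have : L i ⊆ {v₀} := by
        intro x hx
        rw [hv] at hx
        obtain ⟨c, hc⟩ := hx
        simp [hz] at hc
        simp [hc]
      exact (Set.finite_singleton v₀).subset this
    · exfalso
      push_neg at hz
      obtain ⟨j, hj⟩ := hz
      have key : ∀ c : ℕ, ∃ m : ℕ, v₀ + c • v j = (m, 2 ^ m) := by
        intro c
        have : v₀ + c • v j ∈ L i := by
          rw [hv]
          refine ⟨fun k => if k = j then c else 0, ?_⟩
          simp [ite_smul, Finset.sum_ite_eq']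
        exact hsub this
      have key' : ∀ c : ℕ, v₀.2 + c * (v j).2 = 2 ^ (v₀.1 + c * (v j).1) := by
        intro c
        obtain ⟨m, hm⟩ := key c
        have h1 := congrArg Prod.fst hm
        have h2 := congrArg Prod.snd hm
        simp only [Prod.fst_add, Prod.snd_add, Prod.smul_fst, Prod.smul_snd,
          smul_eq_mul] at h1 h2
        rw [h2, h1]
      have h0 := key' 0
      have h1 := key' 1
      have h2 := key' 2
      simp only [Nat.mul_zero, Nat.add_zero, Nat.zero_mul, Nat.one_mul] at h0 h1 h2
      set x := v₀.1
      set y := v₀.2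
      set a := (v j).1
      set b := (v j).2
      have e : 2 * 2 ^ (x + a) = 2 ^ (x + 2 * a) + 2 ^ x := by omega
      rw [pow_add, pow_add, two_mul a, pow_add] at e
      have ht : 0 < 2 ^ x := Nat.pow_pos (by norm_num)
      have hu : (2 : ℕ) ^ a = 1 := by
        by_contra h
        have h2a : 2 ≤ 2 ^ a := by
          have := Nat.one_le_two_pow (n := a); omega
        have h3 : 2 ^ x * (2 * 2 ^ a) ≤ 2 ^ x * (2 ^ a * 2 ^ a) :=
          Nat.mul_le_mul_left _ (Nat.mul_le_mul_right _ h2a)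
        have h4 : 2 ^ x * (2 * 2 ^ a) = 2 * (2 ^ x * 2 ^ a) := by ring
        omega
      have ha : a = 0 := by
        by_contra h
        have := Nat.one_lt_two_pow (n := a) h
        omega
      rw [ha, Nat.add_zero] at h1
      have hb : b = 0 := by omega
      exact hj (Prod.ext ha hb)
  have hSfin : ({p : ℕ × ℕ | ∃ n : ℕ, p = (n, 2 ^ n)}).Finite := by
    rw [hS]; exact Set.finite_iUnion hfin
  have hinf : ({p : ℕ × ℕ | ∃ n : ℕ, p = (n, 2 ^ n)}).Infinite := by
    apply Set.infinite_of_injective_forall_mem (f := fun n : ℕ => (n, 2 ^ n))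
      (hi := fun a b hab => by simpa using congrArg Prod.fst hab)
    intro a; exact ⟨a, rfl⟩
  exact hinf hSfin
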